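/- The space Q = {(x,y) ∈ S¹ × S¹ : |x−y| ≤ 1} is homeomorphic to the cylinder S¹ × [0,1]. -/

import Mathlib

open Complex Real Set

noncomputable def cylToQ : (Metric.sphere (0 : ℂ) 1 × Set.Icc (0 : ℝ) 1) →
    {p : ℂ × ℂ // ‖p.1‖ = 1 ∧ ‖p.2‖ = 1 ∧ ‖p.1 - p.2‖ ≤ 1} := fun q =>
  ⟨(q.1.val, q.1.val * Complex.exp (((π/3) * (2 * q.2.val - 1) : ℝ) * Complex.I)),
    by
      obtain ⟨⟨x, hx⟩, ⟨t, ht⟩⟩ := q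
      simp only [Metric.mem_sphere, dist_zero_right] at hx
      constructor
      · exact hx
      set θ : ℝ := (π/3) * (2 * t - 1) with hθ
      have hθabs : |θ| ≤ π/3 := by
        rw [hθ, abs_mul, abs_of_pos (by positivity : (0:ℝ) < π/3)]
        have : |2 * t - 1| ≤ 1 := by
          rw [abs_le]; constructor <;> nlinarith [ht.1, ht.2]
        nlinarith [pi_pos]
      have hcos : Real.cos θ ≥ 1/2 := by
        have h1 : Real.cos (π/3) ≤ Real.cos |θ| := by
          apply Real.cos_le_cos_of_nonneg_of_le_pi (abs_nonneg θ)
          · linarith [pi_pos]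
          · exact hθabs
        rw [Real.cos_abs, Real.cos_pi_div_three] at h1
        linarith
      constructor
      · simp [map_mul, hx, Complex.norm_exp]
      · have h2 : x - x * Complex.exp ((θ:ℝ) * Complex.I)
            = x * (1 - Complex.exp ((θ:ℝ) * Complex.I)) := by ring
        rw [h2, norm_mul, hx, one_mul]
        have h3 : Complex.exp ((θ:ℝ) * Complex.I) = Complex.cos θ + Complex.sin θ * Complex.I :=
          Complex.exp_mul_I _
        have h4 : ‖(1 : ℂ) - Complex.exp ((θ:ℝ) * Complex.I)‖^2 = 2 - 2 * Real.cos θ := by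
          rw [h3]
          rw [Complex.sq_norm, Complex.normSq_apply]
          simp [Complex.cos_ofReal_re, Complex.sin_ofReal_re, Complex.cos_ofReal_im,
            Complex.sin_ofReal_im]
          nlinarith [Real.sin_sq_add_cos_sq θ]
        nlinarith [norm_nonneg ((1:ℂ) - Complex.exp ((θ:ℝ) * Complex.I))]⟩

theorem cylToQ_continuous : Continuous cylToQ := by
  apply Continuous.subtype_mk
  fun_prop

theorem cylToQ_injective : Function.Injective cylToQ := by
  rintro ⟨⟨x, hx⟩, ⟨t, ht⟩⟩ ⟨⟨x', hx'⟩, ⟨t', ht'⟩⟩ h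
  simp only [cylToQ, Subtype.mk.injEq, Prod.mk.injEq] at h
  obtain ⟨h1, h2⟩ := h
  subst h1
  simp only [Metric.mem_sphere, dist_zero_right] at hx
  have hx0 : x ≠ 0 := by intro h0; rw [h0] at hx; simp at hx
  have h3 : Complex.exp (((π/3) * (2 * t - 1) : ℝ) * Complex.I)
      = Complex.exp (((π/3) * (2 * t' - 1) : ℝ) * Complex.I) :=
    mul_left_cancel₀ hx0 h2
  rw [Complex.exp_eq_exp_iff_exists_int] at h3
  obtain ⟨n, hn⟩ := h3
  have hI : Complex.I ≠ 0 := Complex.I_ne_zero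
  have hn' : ((π/3) * (2 * t - 1) : ℝ) = ((π/3) * (2 * t' - 1) : ℝ) + n * (2 * π) := by
    have h4 : (((π/3) * (2 * t - 1) : ℝ) : ℂ)
        = (((π/3) * (2 * t' - 1) + n * (2 * π) : ℝ) : ℂ) := by
      apply mul_right_cancel₀ hI
      push_cast at hn ⊢
      linear_combination hn
    exact_mod_cast h4
  have hn0 : n = 0 := by
    by_contra hne
    have h5 : (1:ℝ) ≤ |(n:ℝ)| := by
      rw [← Int.cast_abs]
      exact_mod_cast Int.one_le_abs hne
    have ht1 : |2 * t - 1| ≤ 1 := by rw [abs_le]; constructor <;> nlinarith [ht.1, ht.2]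
    have ht2 : |2 * t' - 1| ≤ 1 := by rw [abs_le]; constructor <;> nlinarith [ht'.1, ht'.2]
    have key : (n:ℝ) * (2 * π) = (π/3) * (2 * t - 1) - (π/3) * (2 * t' - 1) := by linarith
    have hk1 := (abs_le.mp ht1).1
    have hk2 := (abs_le.mp ht1).2
    have hk3 := (abs_le.mp ht2).1
    have hk4 := (abs_le.mp ht2).2
    rcases abs_cases ((n:ℝ)) with ⟨he, _⟩ | ⟨he, _⟩ <;> nlinarith [pi_pos]
  rw [hn0] at hn'
  simp only [Int.cast_zero, zero_mul, add_zero] at hn'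
  have : t = t' := by
    have hπ : π ≠ 0 := Real.pi_ne_zero
    have := mul_left_cancel₀ (by positivity : π/3 ≠ 0) hn'
    linarith
  simp [this]

theorem cylToQ_surjective : Function.Surjective cylToQ := by
  rintro ⟨⟨x, y⟩, hx, hy, hxy⟩
  have hx0 : x ≠ 0 := by intro h0; rw [h0] at hx; simp at hx
  set z : ℂ := y / x with hz
  have hzabs : ‖z‖ = 1 := by
    rw [hz, norm_div]
    rw [hx, hy]; norm_num
  have hz0 : z ≠ 0 := by
    intro h0; rw [h0] at hzabs; simp at hzabs
  set θ : ℝ := Complex.arg z with hθ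
  -- Re z ≥ 1/2
  have hre : (1:ℝ)/2 ≤ z.re := by
    have h1 : ‖(1:ℂ) - z‖ ≤ 1 := by
      have : (1:ℂ) - z = (x - y) / x := by rw [hz]; field_simp
      rw [this, norm_div, hx, div_one]
      exact hxy
    have h2 : ‖(1:ℂ) - z‖^2 = 2 - 2 * z.re := by
      rw [Complex.sq_norm, Complex.normSq_apply]
      have := Complex.sq_norm z
      rw [hzabs, Complex.normSq_apply] at this
      simp only [Complex.sub_re, Complex.one_re, Complex.sub_im, Complex.one_im]
      nlinarith
    nlinarith [norm_nonneg ((1:ℂ) - z)]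
  have hcosθ : Real.cos θ = z.re := by
    have := Complex.cos_arg hz0
    rw [hzabs] at this
    rw [hθ, this, div_one]
  have hθabs : |θ| ≤ π/3 := by
    by_contra hcon
    push_neg at hcon
    have h1 : |θ| ≤ π := Complex.abs_arg_le_pi z
    have h2 : Real.cos |θ| < Real.cos (π/3) := by
      apply Real.cos_lt_cos_of_nonneg_of_le_pi (by positivity) h1 hcon
    rw [Real.cos_abs, Real.cos_pi_div_three, hcosθ] at h2
    linarith
  have hθb := abs_le.mp hθabs
  have hπ : (0:ℝ) < π := pi_pos
  refine ⟨⟨⟨x, by simpa using hx⟩, ⟨(θ * 3 / π + 1) / 2, ?_, ?_⟩⟩, ?_⟩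
  · have h0 : (-1:ℝ) ≤ θ * 3 / π := by
      rw [le_div_iff₀ hπ]; linarith [hθb.1]
    linarith
  · have h0 : θ * 3 / π ≤ 1 := by
      rw [div_le_one hπ]; linarith [hθb.2]
    linarith
  · apply Subtype.ext
    simp only [cylToQ]
    refine Prod.ext rfl ?_
    have harg : (π/3) * (2 * ((θ * 3 / π + 1) / 2) - 1) = θ := by
      field_simp
      ring
    rw [harg]
    have h1 : Complex.exp ((θ:ℝ) * Complex.I) = z := by
      have := Complex.norm_mul_exp_arg_mul_I z
      rw [hzabs] at this
      simpa [hθ] using this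
    rw [h1, hz]
    field_simp

theorem config_space_isosceles_triangles_homeo_cylinder :
    Nonempty
      ({p : ℂ × ℂ // ‖p.1‖ = 1 ∧ ‖p.2‖ = 1 ∧ ‖p.1 - p.2‖ ≤ 1} ≃ₜ
        (Metric.sphere (0 : ℂ) 1 × Set.Icc (0 : ℝ) 1)) := by
  have hbij : Function.Bijective cylToQ := ⟨cylToQ_injective, cylToQ_surjective⟩
  exact ⟨(Continuous.homeoOfEquivCompactToT2 (f := Equiv.ofBijective _ hbij)
    cylToQ_continuous).symm⟩
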